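/- Let k have char(k) ≠ 2,3 and V_2 be 2-dimensional with basis {e_1,e_2}. Suppose (H1,H2) is a 2-partition of K_6^3 for which there exist five distinct vertices x,y,z,t,u in {1,...,6} with all six faces {x,y,z}, {x,y,t}, {x,z,t}, {y,z,u}, {y,t,u}, {z,t,u} in E(H1). Then the class of the associated basis tensor ω_{(H1,H2)} is zero in Λ^{S^3}_{V_2}[6]. -/

import Mathlib

open scoped TensorProduct

/-- The index type: 3-element subsets of `{1,...,n}`, i.e. hyperedges of `K_n^3`. -/
abbrev Tri (n : ℕ) := {S : Finset (Fin n) // S.card = 3}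

/-- A family of entries is tetrahedrally degenerate if there are `x < y < z < t`
such that the entries on the four faces of the tetrahedron `{x,y,z,t}` coincide. -/
def tetraDeg {V : Type*} {n : ℕ} (v : Tri n → V) : Prop :=
  ∃ x y z t : Fin n, x < y ∧ y < z ∧ z < t ∧
    ∀ S₁ S₂ : Tri n, (S₁ : Finset (Fin n)) ⊆ {x, y, z, t} →
      (S₂ : Finset (Fin n)) ⊆ {x, y, z, t} → v S₁ = v S₂

/-- The subspace `E^{S^3}_V[n]` of `T^{S^3}_V[n] = V^{⊗ binom(n,3)}`. -/
def Esub (k : Type*) {V : Type*} [Field k] [AddCommGroup V] [Module k V] (n : ℕ) :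
    Submodule k (⨂[k] (_ : Tri n), V) :=
  Submodule.span k {w | ∃ v : Tri n → V, tetraDeg v ∧ w = PiTensorProduct.tprod k v}

/- ### Auxiliary lemmas -/

lemma my_card3 {α : Type*} [DecidableEq α] {p q r : α}
    (h1 : p ≠ q) (h2 : p ≠ r) (h3 : q ≠ r) : ({p, q, r} : Finset α).card = 3 := by
  rw [Finset.card_insert_of_notMem (by simp [h1, h2]),
    Finset.card_insert_of_notMem (by simp [h3]), Finset.card_singleton]

lemma my_card4 {α : Type*} [DecidableEq α] {p q r s : α}
    (h1 : p ≠ q) (h2 : p ≠ r) (h3 : p ≠ s) (h4 : q ≠ r) (h5 : q ≠ s) (h6 : r ≠ s) :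
    ({p, q, r, s} : Finset α).card = 4 := by
  rw [Finset.card_insert_of_notMem (by simp [h1, h2, h3]), my_card3 h4 h5 h6]

lemma my_card2le {α : Type*} [DecidableEq α] (p q : α) : ({p, q} : Finset α).card ≤ 2 :=
  (Finset.card_insert_le _ _).trans (by simp)

lemma my_card3le {α : Type*} [DecidableEq α] (p q r : α) : ({p, q, r} : Finset α).card ≤ 3 :=
  (Finset.card_insert_le _ _).trans (Nat.succ_le_succ (my_card2le q r))

lemma my_card4le {α : Type*} [DecidableEq α] (p q r s : α) :
    ({p, q, r, s} : Finset α).card ≤ 4 :=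
  (Finset.card_insert_le _ _).trans (Nat.succ_le_succ (my_card3le q r s))

lemma card_succ_of_insert {α : Type*} [DecidableEq α] {a : α} {s : Finset α} {n : ℕ}
    (h : (insert a s).card = n + 1) (hs : s.card ≤ n) : a ∉ s ∧ s.card = n := by
  have hle := Finset.card_insert_le a s
  constructor
  · intro hm; rw [Finset.insert_eq_self.mpr hm] at h; omega
  · omega

/-- The four 3-element subsets (faces) of a 4-element set. -/
lemma faces {α : Type*} [DecidableEq α] {p q r s : α}
    (hpq : p ≠ q) (hpr : p ≠ r) (hps : p ≠ s) (hqr : q ≠ r) (hqs : q ≠ s) (hrs : r ≠ s)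
    {S : Finset α} (hsub : S ⊆ {p, q, r, s}) (hc : S.card = 3) :
    S = {q, r, s} ∨ S = {p, r, s} ∨ S = {p, q, s} ∨ S = {p, q, r} := by
  by_cases hp : p ∈ S
  · by_cases hq : q ∈ S
    · by_cases hr : r ∈ S
      · right; right; right
        have hs' : s ∉ S := by
          intro hsS
          have hsub2 : ({p, q, r, s} : Finset α) ⊆ S := by
            intro m hm
            simp only [Finset.mem_insert, Finset.mem_singleton] at hm
            rcases hm with rfl | rfl | rfl | rfl <;> assumption
          have := Finset.card_le_card hsub2
          rw [my_card4 hpq hpr hps hqr hqs hrs] at this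
          omega
        have hsub3 : S ⊆ {p, q, r} := by
          intro m hm
          have h2 := hsub hm
          simp only [Finset.mem_insert, Finset.mem_singleton] at h2 ⊢
          rcases h2 with h | h | h | h
          exacts [Or.inl h, Or.inr (Or.inl h), Or.inr (Or.inr h), absurd (h ▸ hm) hs']
        exact Finset.eq_of_subset_of_card_le hsub3 (by rw [my_card3 hpq hpr hqr, hc])
      · right; right; left
        have hsub3 : S ⊆ {p, q, s} := by
          intro m hm
          have h2 := hsub hm
          simp only [Finset.mem_insert, Finset.mem_singleton] at h2 ⊢
          rcases h2 with h | h | h | h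
          exacts [Or.inl h, Or.inr (Or.inl h), absurd (h ▸ hm) hr, Or.inr (Or.inr h)]
        exact Finset.eq_of_subset_of_card_le hsub3 (by rw [my_card3 hpq hps hqs, hc])
    · right; left
      have hsub3 : S ⊆ {p, r, s} := by
        intro m hm
        have h2 := hsub hm
        simp only [Finset.mem_insert, Finset.mem_singleton] at h2 ⊢
        rcases h2 with h | h | h | h
        exacts [Or.inl h, absurd (h ▸ hm) hq, Or.inr (Or.inl h), Or.inr (Or.inr h)]
      exact Finset.eq_of_subset_of_card_le hsub3 (by rw [my_card3 hpr hps hrs, hc])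
  · left
    have hsub3 : S ⊆ {q, r, s} := by
      intro m hm
      have h2 := hsub hm
      simp only [Finset.mem_insert, Finset.mem_singleton] at h2 ⊢
      rcases h2 with h | h | h | h
      exacts [absurd (h ▸ hm) hp, Or.inl h, Or.inr (Or.inl h), Or.inr (Or.inr h)]
    exact Finset.eq_of_subset_of_card_le hsub3 (by rw [my_card3 hqr hqs hrs, hc])

/-- A family that is constant on the faces of a 4-element set is tetrahedrally degenerate. -/
lemma tetraDeg_const {V : Type*} {D : Finset (Fin 6)} (hD : D.card = 4)
    (w : Tri 6 → V) (cst : V)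
    (h : ∀ S : Tri 6, (S : Finset (Fin 6)) ⊆ D → w S = cst) : tetraDeg w := by
  set f := D.orderEmbOfFin hD with hf
  have hmem : ∀ i : Fin 4, f i ∈ D := fun i => Finset.orderEmbOfFin_mem D hD i
  have hDsub : ({f 0, f 1, f 2, f 3} : Finset (Fin 6)) ⊆ D := by
    simp [Finset.insert_subset_iff, hmem]
  refine ⟨f 0, f 1, f 2, f 3, f.strictMono (by decide), f.strictMono (by decide),
    f.strictMono (by decide), ?_⟩
  intro S₁ S₂ h1 h2
  rw [h S₁ (h1.trans hDsub), h S₂ (h2.trans hDsub)]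

/-- Distinct 3-element subsets give distinct elements of `Tri 6`. -/
lemma triNe {P Q : Finset (Fin 6)} {hP : P.card = 3} {hQ : Q.card = 3}
    (m : Fin 6) (h1 : m ∈ P) (h2 : m ∉ Q) : (⟨P, hP⟩ : Tri 6) ≠ ⟨Q, hQ⟩ :=
  fun h => h2 ((Subtype.mk.inj h) ▸ h1)

theorem stmt15 {k V : Type*} [Field k] [AddCommGroup V] [Module k V]
    (hk2 : ringChar k ≠ 2) (hk3 : ringChar k ≠ 3) (b : Module.Basis (Fin 2) k V)
    (A : Finset (Tri 6))
    (h : ∃ x y z t u : Fin 6, ({x, y, z, t, u} : Finset (Fin 6)).card = 5 ∧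
      ∀ S : Tri 6,
        ((S : Finset (Fin 6)) = {x, y, z} ∨ (S : Finset (Fin 6)) = {x, y, t} ∨
          (S : Finset (Fin 6)) = {x, z, t} ∨ (S : Finset (Fin 6)) = {y, z, u} ∨
          (S : Finset (Fin 6)) = {y, t, u} ∨ (S : Finset (Fin 6)) = {z, t, u}) →
        S ∈ A) :
    (Submodule.Quotient.mk (p := Esub k (V := V) 6)
        (PiTensorProduct.tprod k (fun S => if S ∈ A then b 0 else b 1))) = 0 := by
  classical
  obtain ⟨x, y, z, w, u, hcard, hA⟩ := h
  -- distinctness of the five vertices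
  have h1 := card_succ_of_insert hcard (my_card4le y z w u)
  have h2 := card_succ_of_insert h1.2 (my_card3le z w u)
  have h3 := card_succ_of_insert h2.2 (my_card2le w u)
  have h4 := card_succ_of_insert h3.2 (by simp)
  obtain ⟨hxy, hxz, hxw, hxu⟩ : x ≠ y ∧ x ≠ z ∧ x ≠ w ∧ x ≠ u := by simpa using h1.1
  obtain ⟨hyz, hyw, hyu⟩ : y ≠ z ∧ y ≠ w ∧ y ≠ u := by simpa using h2.1
  obtain ⟨hzw, hzu⟩ : z ≠ w ∧ z ≠ u := by simpa using h3.1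
  have hwu : w ≠ u := by simpa using h4.1
  -- the seven relevant triangles
  set s1 : Tri 6 := ⟨{x, y, z}, my_card3 hxy hxz hyz⟩ with hs1
  set s2 : Tri 6 := ⟨{x, y, w}, my_card3 hxy hxw hyw⟩ with hs2
  set s3 : Tri 6 := ⟨{x, z, w}, my_card3 hxz hxw hzw⟩ with hs3
  set s4 : Tri 6 := ⟨{y, z, w}, my_card3 hyz hyw hzw⟩ with hs4
  set tB1 : Tri 6 := ⟨{y, z, u}, my_card3 hyz hyu hzu⟩ with htB1
  set tB2 : Tri 6 := ⟨{y, w, u}, my_card3 hyw hyu hwu⟩ with htB2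
  set tB3 : Tri 6 := ⟨{z, w, u}, my_card3 hzw hzu hwu⟩ with htB3
  have hs1A : s1 ∈ A := hA s1 (Or.inl (by rw [hs1]))
  have hs2A : s2 ∈ A := hA s2 (Or.inr (Or.inl (by rw [hs2])))
  have hs3A : s3 ∈ A := hA s3 (Or.inr (Or.inr (Or.inl (by rw [hs3]))))
  have htB1A : tB1 ∈ A := hA tB1 (Or.inr (Or.inr (Or.inr (Or.inl (by rw [htB1])))))
  have htB2A : tB2 ∈ A :=
    hA tB2 (Or.inr (Or.inr (Or.inr (Or.inr (Or.inl (by rw [htB2]))))))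
  have htB3A : tB3 ∈ A :=
    hA tB3 (Or.inr (Or.inr (Or.inr (Or.inr (Or.inr (by rw [htB3]))))))
  set v : Tri 6 → V := fun S => if S ∈ A then b 0 else b 1 with hv
  have hvs : ∀ S ∈ A, v S = b 0 := fun S hS => by simp only [hv]; rw [if_pos hS]
  have memE : ∀ w' : Tri 6 → V, tetraDeg w' →
      (PiTensorProduct.tprod k w' : ⨂[k] (_ : Tri 6), V) ∈ Esub k (V := V) 6 :=
    fun w' hw => Submodule.subset_span ⟨w', hw, rfl⟩
  rw [Submodule.Quotient.mk_eq_zero]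
  by_cases hf : s4 ∈ A
  · -- the tetrahedron {x,y,z,w} is degenerate
    apply memE
    apply tetraDeg_const (my_card4 hxy hxz hxw hyz hyw hzw) v (b 0)
    intro S hsub
    rcases faces hxy hxz hxw hyz hyw hzw hsub S.2 with hS | hS | hS | hS
    · have hSe : S = s4 := Subtype.ext (by rw [hS, hs4])
      rw [hSe]; exact hvs s4 hf
    · have hSe : S = s3 := Subtype.ext (by rw [hS, hs3])
      rw [hSe]; exact hvs s3 hs3A
    · have hSe : S = s2 := Subtype.ext (by rw [hS, hs2])
      rw [hSe]; exact hvs s2 hs2A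
    · have hSe : S = s1 := Subtype.ext (by rw [hS, hs1])
      rw [hSe]; exact hvs s1 hs1A
  · -- the interesting case: {y,z,w} ∉ A
    set b0 : V := b 0 with hb0
    set b1 : V := b 1 with hb1
    -- distinctness of triangles
    have e12 : s1 ≠ s2 := by
      rw [hs1, hs2]; exact triNe z (by simp) (by simp [Ne.symm hxz, Ne.symm hyz, hzw])
    have e13 : s1 ≠ s3 := by
      rw [hs1, hs3]; exact triNe y (by simp) (by simp [Ne.symm hxy, hyz, hyw])
    have e14 : s1 ≠ s4 := by
      rw [hs1, hs4]; exact triNe x (by simp) (by simp [hxy, hxz, hxw])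
    have e23 : s2 ≠ s3 := by
      rw [hs2, hs3]; exact triNe y (by simp) (by simp [Ne.symm hxy, hyz, hyw])
    have e24 : s2 ≠ s4 := by
      rw [hs2, hs4]; exact triNe x (by simp) (by simp [hxy, hxz, hxw])
    have e34 : s3 ≠ s4 := by
      rw [hs3, hs4]; exact triNe x (by simp) (by simp [hxy, hxz, hxw])
    have hus1 : u ∉ ({x, y, z} : Finset (Fin 6)) := by
      simp [Ne.symm hxu, Ne.symm hyu, Ne.symm hzu]
    have hus2 : u ∉ ({x, y, w} : Finset (Fin 6)) := by
      simp [Ne.symm hxu, Ne.symm hyu, Ne.symm hwu]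
    have hus3 : u ∉ ({x, z, w} : Finset (Fin 6)) := by
      simp [Ne.symm hxu, Ne.symm hzu, Ne.symm hwu]
    have hus4 : u ∉ ({y, z, w} : Finset (Fin 6)) := by
      simp [Ne.symm hyu, Ne.symm hzu, Ne.symm hwu]
    have eB1s1 : tB1 ≠ s1 := by rw [htB1, hs1]; exact triNe u (by simp) hus1
    have eB1s2 : tB1 ≠ s2 := by rw [htB1, hs2]; exact triNe u (by simp) hus2
    have eB1s3 : tB1 ≠ s3 := by rw [htB1, hs3]; exact triNe u (by simp) hus3
    have eB1s4 : tB1 ≠ s4 := by rw [htB1, hs4]; exact triNe u (by simp) hus4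
    have eB2s1 : tB2 ≠ s1 := by rw [htB2, hs1]; exact triNe u (by simp) hus1
    have eB2s2 : tB2 ≠ s2 := by rw [htB2, hs2]; exact triNe u (by simp) hus2
    have eB2s3 : tB2 ≠ s3 := by rw [htB2, hs3]; exact triNe u (by simp) hus3
    have eB2s4 : tB2 ≠ s4 := by rw [htB2, hs4]; exact triNe u (by simp) hus4
    have eB3s1 : tB3 ≠ s1 := by rw [htB3, hs1]; exact triNe u (by simp) hus1
    have eB3s2 : tB3 ≠ s2 := by rw [htB3, hs2]; exact triNe u (by simp) hus2
    have eB3s3 : tB3 ≠ s3 := by rw [htB3, hs3]; exact triNe u (by simp) hus3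
    have eB3s4 : tB3 ≠ s4 := by rw [htB3, hs4]; exact triNe u (by simp) hus4
    -- the update family
    set U : V → V → V → V → Tri 6 → V := fun c1 c2 c3 c4 =>
      Function.update (Function.update (Function.update (Function.update v s1 c1)
        s2 c2) s3 c3) s4 c4 with hU
    have hUval : ∀ c1 c2 c3 c4 S, U c1 c2 c3 c4 S =
        if S = s4 then c4 else if S = s3 then c3 else if S = s2 then c2 else
          if S = s1 then c1 else v S := by
      intro c1 c2 c3 c4 S
      simp only [hU, Function.update_apply]
    have hU1 : ∀ c1 c2 c3 c4, U c1 c2 c3 c4 =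
        Function.update (Function.update (Function.update (Function.update v s2 c2)
          s3 c3) s4 c4) s1 c1 := by
      intro c1 c2 c3 c4
      simp only [hU]
      rw [Function.update_comm e12, Function.update_comm e13, Function.update_comm e14]
    have hU2 : ∀ c1 c2 c3 c4, U c1 c2 c3 c4 =
        Function.update (Function.update (Function.update (Function.update v s1 c1)
          s3 c3) s4 c4) s2 c2 := by
      intro c1 c2 c3 c4
      simp only [hU]
      rw [Function.update_comm e23, Function.update_comm e24]
    have hU3 : ∀ c1 c2 c3 c4, U c1 c2 c3 c4 =
        Function.update (Function.update (Function.update (Function.update v s1 c1)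
          s2 c2) s4 c4) s3 c3 := by
      intro c1 c2 c3 c4
      simp only [hU]
      rw [Function.update_comm e34]
    set tp : (Tri 6 → V) → ⨂[k] (_ : Tri 6), V :=
      fun m => PiTensorProduct.tprod k m with htp
    -- multilinearity in each of the four slots
    have hadd1 : ∀ c c' c2 c3 c4, tp (U (c + c') c2 c3 c4) =
        tp (U c c2 c3 c4) + tp (U c' c2 c3 c4) := by
      intro c c' c2 c3 c4
      simp only [htp, hU1]
      exact MultilinearMap.map_update_add _ _ _ _ _
    have hsmul1 : ∀ (a : k) c c2 c3 c4, tp (U (a • c) c2 c3 c4) =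
        a • tp (U c c2 c3 c4) := by
      intro a c c2 c3 c4
      simp only [htp, hU1]
      exact MultilinearMap.map_update_smul _ _ _ _ _
    have hadd2 : ∀ c1 c c' c3 c4, tp (U c1 (c + c') c3 c4) =
        tp (U c1 c c3 c4) + tp (U c1 c' c3 c4) := by
      intro c1 c c' c3 c4
      simp only [htp, hU2]
      exact MultilinearMap.map_update_add _ _ _ _ _
    have hsmul2 : ∀ (a : k) c1 c c3 c4, tp (U c1 (a • c) c3 c4) =
        a • tp (U c1 c c3 c4) := by
      intro a c1 c c3 c4
      simp only [htp, hU2]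
      exact MultilinearMap.map_update_smul _ _ _ _ _
    have hadd3 : ∀ c1 c2 c c' c4, tp (U c1 c2 (c + c') c4) =
        tp (U c1 c2 c c4) + tp (U c1 c2 c' c4) := by
      intro c1 c2 c c' c4
      simp only [htp, hU3]
      exact MultilinearMap.map_update_add _ _ _ _ _
    have hsmul3 : ∀ (a : k) c1 c2 c c4, tp (U c1 c2 (a • c) c4) =
        a • tp (U c1 c2 c c4) := by
      intro a c1 c2 c c4
      simp only [htp, hU3]
      exact MultilinearMap.map_update_smul _ _ _ _ _
    have hadd4 : ∀ c1 c2 c3 c c', tp (U c1 c2 c3 (c + c')) =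
        tp (U c1 c2 c3 c) + tp (U c1 c2 c3 c') := by
      intro c1 c2 c3 c c'
      simp only [htp, hU]
      exact MultilinearMap.map_update_add _ _ _ _ _
    have hsmul4 : ∀ (a : k) c1 c2 c3 c, tp (U c1 c2 c3 (a • c)) =
        a • tp (U c1 c2 c3 c) := by
      intro a c1 c2 c3 c
      simp only [htp, hU]
      exact MultilinearMap.map_update_smul _ _ _ _ _
    -- degeneracy along the tetrahedron {y,z,w,u}
    have hBmem : ∀ c1 c2 c3, tp (U c1 c2 c3 b0) ∈ Esub k (V := V) 6 := by
      intro c1 c2 c3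
      apply memE
      apply tetraDeg_const (my_card4 hyz hyw hyu hzw hzu hwu) _ b0
      intro S hsub
      rcases faces hyz hyw hyu hzw hzu hwu hsub S.2 with hS | hS | hS | hS
      · have hSe : S = tB3 := Subtype.ext (by rw [hS, htB3])
        rw [hSe, hUval, if_neg eB3s4, if_neg eB3s3, if_neg eB3s2, if_neg eB3s1, hb0]
        exact hvs tB3 htB3A
      · have hSe : S = tB2 := Subtype.ext (by rw [hS, htB2])
        rw [hSe, hUval, if_neg eB2s4, if_neg eB2s3, if_neg eB2s2, if_neg eB2s1, hb0]
        exact hvs tB2 htB2A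
      · have hSe : S = tB1 := Subtype.ext (by rw [hS, htB1])
        rw [hSe, hUval, if_neg eB1s4, if_neg eB1s3, if_neg eB1s2, if_neg eB1s1, hb0]
        exact hvs tB1 htB1A
      · have hSe : S = s4 := Subtype.ext (by rw [hS, hs4])
        rw [hSe, hUval, if_pos rfl]
    -- degeneracy along the tetrahedron {x,y,z,w}
    have hDiagmem : ∀ c, tp (U c c c c) ∈ Esub k (V := V) 6 := by
      intro c
      apply memE
      apply tetraDeg_const (my_card4 hxy hxz hxw hyz hyw hzw) _ c
      intro S hsub
      rcases faces hxy hxz hxw hyz hyw hzw hsub S.2 with hS | hS | hS | hS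
      · have hSe : S = s4 := Subtype.ext (by rw [hS, hs4])
        rw [hSe, hUval, if_pos rfl]
      · have hSe : S = s3 := Subtype.ext (by rw [hS, hs3])
        rw [hSe, hUval, if_neg e34, if_pos rfl]
      · have hSe : S = s2 := Subtype.ext (by rw [hS, hs2])
        rw [hSe, hUval, if_neg e24, if_neg e23, if_pos rfl]
      · have hSe : S = s1 := Subtype.ext (by rw [hS, hs1])
        rw [hSe, hUval, if_neg e14, if_neg e13, if_neg e12, if_pos rfl]
    have hslot : ∀ a : k, a ≠ 0 →
        tp (U (b0 + a • b1) (b0 + a • b1) (b0 + a • b1) b1) ∈ Esub k (V := V) 6 := by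
      intro a ha
      have hd := hDiagmem (b0 + a • b1)
      rw [hadd4, hsmul4] at hd
      have hsb := Submodule.sub_mem _ hd (hBmem (b0 + a • b1) (b0 + a • b1) (b0 + a • b1))
      rw [add_sub_cancel_left] at hsb
      exact (Submodule.smul_mem_iff _ ha).mp hsb
    have key : ∀ a : k, a ≠ 0 →
        tp (U b0 b0 b0 b1) + a • tp (U b1 b0 b0 b1) + a • tp (U b0 b1 b0 b1) +
          a • tp (U b0 b0 b1 b1) + (a * a) • tp (U b1 b1 b0 b1) +
          (a * a) • tp (U b1 b0 b1 b1) + (a * a) • tp (U b0 b1 b1 b1) +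
          (a * a * a) • tp (U b1 b1 b1 b1) ∈ Esub k (V := V) 6 := by
      intro a ha
      have hmem := hslot a ha
      have hexp : tp (U (b0 + a • b1) (b0 + a • b1) (b0 + a • b1) b1) =
          tp (U b0 b0 b0 b1) + a • tp (U b1 b0 b0 b1) + a • tp (U b0 b1 b0 b1) +
            a • tp (U b0 b0 b1 b1) + (a * a) • tp (U b1 b1 b0 b1) +
            (a * a) • tp (U b1 b0 b1 b1) + (a * a) • tp (U b0 b1 b1 b1) +
            (a * a * a) • tp (U b1 b1 b1 b1) := by
        simp only [hadd1, hsmul1, hadd2, hsmul2, hadd3, hsmul3]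
        module
      rw [← hexp]
      exact hmem
    have two_ne : (2 : k) ≠ 0 := Ring.two_ne_zero hk2
    have three_ne : (3 : k) ≠ 0 := by
      rw [Ne, (by norm_cast : (3 : k) = ((3 : ℕ) : k)), ringChar.spec,
        Nat.dvd_prime Nat.prime_three]
      exact mt (or_iff_left hk3).mp CharP.ringChar_ne_one
    have k1 := key 1 one_ne_zero
    have k2 := key (-1) (neg_ne_zero.mpr one_ne_zero)
    have k3 := key 2 two_ne
    have hz := hDiagmem b1
    have comb : (3 : k) • tp (U b0 b0 b0 b1) =
        (3 : k) • (tp (U b0 b0 b0 b1) + (1 : k) • tp (U b1 b0 b0 b1) +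
          (1 : k) • tp (U b0 b1 b0 b1) + (1 : k) • tp (U b0 b0 b1 b1) +
          ((1 : k) * (1 : k)) • tp (U b1 b1 b0 b1) +
          ((1 : k) * (1 : k)) • tp (U b1 b0 b1 b1) +
          ((1 : k) * (1 : k)) • tp (U b0 b1 b1 b1) +
          ((1 : k) * (1 : k) * (1 : k)) • tp (U b1 b1 b1 b1)) +
        (tp (U b0 b0 b0 b1) + (-1 : k) • tp (U b1 b0 b0 b1) +
          (-1 : k) • tp (U b0 b1 b0 b1) + (-1 : k) • tp (U b0 b0 b1 b1) +
          ((-1 : k) * (-1 : k)) • tp (U b1 b1 b0 b1) +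
          ((-1 : k) * (-1 : k)) • tp (U b1 b0 b1 b1) +
          ((-1 : k) * (-1 : k)) • tp (U b0 b1 b1 b1) +
          ((-1 : k) * (-1 : k) * (-1 : k)) • tp (U b1 b1 b1 b1)) -
        (tp (U b0 b0 b0 b1) + (2 : k) • tp (U b1 b0 b0 b1) +
          (2 : k) • tp (U b0 b1 b0 b1) + (2 : k) • tp (U b0 b0 b1 b1) +
          ((2 : k) * (2 : k)) • tp (U b1 b1 b0 b1) +
          ((2 : k) * (2 : k)) • tp (U b1 b0 b1 b1) +
          ((2 : k) * (2 : k)) • tp (U b0 b1 b1 b1) +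
          ((2 : k) * (2 : k) * (2 : k)) • tp (U b1 b1 b1 b1)) +
        (6 : k) • tp (U b1 b1 b1 b1) := by
      module
    have h3mem : (3 : k) • tp (U b0 b0 b0 b1) ∈ Esub k (V := V) 6 := by
      rw [comb]
      exact Submodule.add_mem _ (Submodule.sub_mem _
        (Submodule.add_mem _ (Submodule.smul_mem _ _ k1) k2) k3)
        (Submodule.smul_mem _ _ hz)
    have hfin := (Submodule.smul_mem_iff _ three_ne).mp h3mem
    have hVv : U b0 b0 b0 b1 = v := by
      funext S
      rw [hUval]
      by_cases h4' : S = s4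
      · rw [if_pos h4', h4', hv, hb1]
        simp only []
        rw [if_neg hf]
      · rw [if_neg h4']
        by_cases h3' : S = s3
        · rw [if_pos h3', h3', hb0]; exact (hvs s3 hs3A).symm
        · rw [if_neg h3']
          by_cases h2' : S = s2
          · rw [if_pos h2', h2', hb0]; exact (hvs s2 hs2A).symm
          · rw [if_neg h2']
            by_cases h1' : S = s1
            · rw [if_pos h1', h1', hb0]; exact (hvs s1 hs1A).symm
            · rw [if_neg h1']
    rw [← hVv]
    exact hfin
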